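/- For all indices i ≠ j in {1,…,n}, the row-sum vectors satisfy [R_i, R_j] = R_i − R_j, where [X,Y] = XY − YX. Consequently, the complex linear span of {R_1, …, R_n} is an n-dimensional Lie subalgebra of 𝔏_GM; for n = 4 this is Model 4.4a, the Felsenstein 1981 model. -/

import Mathlib

open Matrix

noncomputable section

/-- The elementary rate matrix `L_ij`: entry 1 at `(i,j)`, entry −1 at `(j,j)`, 0 elsewhere. -/
def Lmat (n : ℕ) (i j : Fin n) : Matrix (Fin n) (Fin n) ℂ :=
  Matrix.single i j 1 - Matrix.single j j 1

/-- `𝔏_GM`: the complex matrices each of whose columns sums to zero. -/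
def LGMset (n : ℕ) : Set (Matrix (Fin n) (Fin n) ℂ) :=
  {Q | ∀ j, ∑ i, Q i j = 0}

/-- `𝔏_GM⁺`: nonnegative real linear combinations of the elementary rate matrices. -/
def LGMplus (n : ℕ) : Set (Matrix (Fin n) (Fin n) ℂ) :=
  {Q | ∃ α : Fin n → Fin n → ℝ, (∀ i j, 0 ≤ α i j) ∧
    Q = ∑ i, ∑ j, if i = j then 0 else (α i j : ℂ) • Lmat n i j}

/-- Row-sum vectors `R_i = ∑_{j ≠ i} L_ij`. -/
def Rvec (n : ℕ) (i : Fin n) : Matrix (Fin n) (Fin n) ℂ :=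
  ∑ j ∈ Finset.univ.filter (· ≠ i), Lmat n i j

/-- The matrix with row `i` all ones, other rows zero. -/
def Bmat (n : ℕ) (i : Fin n) : Matrix (Fin n) (Fin n) ℂ :=
  Matrix.of fun a _ => if a = i then 1 else 0

lemma Rvec_eq (n : ℕ) (i : Fin n) : Rvec n i = Bmat n i - 1 := by
  ext a b
  simp only [Rvec, Lmat, Matrix.sum_apply, Matrix.sub_apply, Bmat, Matrix.of_apply,
    Matrix.one_apply, Matrix.single, Matrix.of_apply]
  rw [Finset.sum_sub_distrib]
  by_cases hai : a = i <;> by_cases hab : a = b <;> by_cases hbi : b = i <;>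
    simp_all [Finset.sum_ite_eq', eq_comm, Finset.filter_eq'] <;>
  · have hE : ∀ (s : Finset (Fin n)), Finset.filter (fun x => a = x ∧ b = x) s = ∅ := by
      intro s; apply Finset.filter_false_of_mem; rintro x - ⟨rfl, rfl⟩; simp_all
    simp [hE]

lemma Bmul (n : ℕ) (i j : Fin n) : Bmat n i * Bmat n j = Bmat n i := by
  ext a b
  simp [Bmat, Matrix.mul_apply, Finset.sum_ite_eq]

lemma bracket_Rvec (n : ℕ) (i j : Fin n) :
    Rvec n i * Rvec n j - Rvec n j * Rvec n i = Rvec n i - Rvec n j := by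
  rw [Rvec_eq, Rvec_eq]
  have h1 := Bmul n i j
  have h2 := Bmul n j i
  noncomm_ring
  rw [h1, h2]
  abel

lemma Rvec_apply (n : ℕ) (i a b : Fin n) :
    Rvec n i a b = (if a = i then 1 else 0) - (if a = b then 1 else 0) := by
  rw [Rvec_eq]
  simp [Bmat, Matrix.sub_apply, Matrix.one_apply]

theorem felsenstein_row_sum_lie_algebra (n : ℕ) (hn : 2 ≤ n) :
    (∀ i j : Fin n, i ≠ j →
      Rvec n i * Rvec n j - Rvec n j * Rvec n i = Rvec n i - Rvec n j) ∧
    (∀ X ∈ Submodule.span ℂ (Set.range (Rvec n)),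
      ∀ Y ∈ Submodule.span ℂ (Set.range (Rvec n)),
        X * Y - Y * X ∈ Submodule.span ℂ (Set.range (Rvec n))) ∧
    ((Submodule.span ℂ (Set.range (Rvec n)) : Set (Matrix (Fin n) (Fin n) ℂ)) ⊆ LGMset n) ∧
    Module.finrank ℂ ↥(Submodule.span ℂ (Set.range (Rvec n))) = n := by
  set S := Submodule.span ℂ (Set.range (Rvec n)) with hS
  have hmem : ∀ i, Rvec n i ∈ S := fun i => Submodule.subset_span ⟨i, rfl⟩
  refine ⟨fun i j _ => bracket_Rvec n i j, ?_, ?_, ?_⟩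
  · -- closed under bracket
    intro X hX
    induction hX using Submodule.span_induction with
    | mem x hx =>
      obtain ⟨i, rfl⟩ := hx
      intro Y hY
      induction hY using Submodule.span_induction with
      | mem y hy =>
        obtain ⟨j, rfl⟩ := hy
        rw [bracket_Rvec]
        exact S.sub_mem (hmem i) (hmem j)
      | zero => simpa using S.zero_mem
      | add y z _ _ hy hz =>
        have : Rvec n i * (y + z) - (y + z) * Rvec n i =
            (Rvec n i * y - y * Rvec n i) + (Rvec n i * z - z * Rvec n i) := by
          noncomm_ring
        rw [this]; exact S.add_mem hy hz
      | smul c y _ hy =>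
        have : Rvec n i * (c • y) - (c • y) * Rvec n i =
            c • (Rvec n i * y - y * Rvec n i) := by
          simp [Matrix.mul_smul, Matrix.smul_mul, smul_sub]
        rw [this]; exact S.smul_mem c hy
    | zero => intro Y _; simpa using S.zero_mem
    | add x z _ _ hx hz =>
      intro Y hY
      have : (x + z) * Y - Y * (x + z) = (x * Y - Y * x) + (z * Y - Y * z) := by
        noncomm_ring
      rw [this]; exact S.add_mem (hx Y hY) (hz Y hY)
    | smul c x _ hx =>
      intro Y hY
      have : (c • x) * Y - Y * (c • x) = c • (x * Y - Y * x) := by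
        simp [Matrix.mul_smul, Matrix.smul_mul, smul_sub]
      rw [this]; exact S.smul_mem c (hx Y hY)
  · -- contained in LGMset
    intro X hX
    induction hX using Submodule.span_induction with
    | mem x hx =>
      obtain ⟨i, rfl⟩ := hx
      intro b
      simp [Rvec_apply, Finset.sum_sub_distrib, Finset.sum_ite_eq']
    | zero => intro b; simp
    | add x z _ _ hx hz => intro b; simp [Finset.sum_add_distrib, hx b, hz b]
    | smul c x _ hx =>
      intro b
      simp only [Matrix.smul_apply, smul_eq_mul, ← Finset.mul_sum, hx b, mul_zero]
  · -- dimension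
    have hli : LinearIndependent ℂ (Rvec n) := by
      rw [Fintype.linearIndependent_iff]
      intro g hg i
      haveI : Nontrivial (Fin n) := Fin.nontrivial_iff_two_le.mpr hn
      obtain ⟨b, hb⟩ := exists_ne i
      have := congrFun (congrFun hg i) b
      simp only [Matrix.sum_apply, Matrix.smul_apply, Rvec_apply, Matrix.zero_apply,
        smul_eq_mul] at this
      have hib : ¬ i = b := fun h => hb h.symm
      rw [Finset.sum_eq_single i] at this
      · simpa [hib] using this
      · intro k _ hk
        simp [Ne.symm hk, hib]
      · simp
    rw [finrank_span_eq_card hli, Fintype.card_fin]
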